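/- Let δ ∈ (0,1], μ > 0, L > 0, and assume f is μ-strongly convex and L-smooth with respect to the Hilbert norm on lin(A), i.e. f(x) + ⟨∇f(x), y − x⟩ + (μ/2)‖y − x‖² ≤ f(y) ≤ f(x) + ⟨∇f(x), y − x⟩ + (L/2)‖y − x‖² for all x, y ∈ lin(A). Let r := sup_{z∈A} ‖z‖ and let m > 0 satisfy sup_{z∈A} ⟨d, z⟩ ≥ m·‖d‖ for every nonzero d ∈ lin(A) (minimal directional width). Let x⋆ ∈ lin(A) be a minimizer of f over lin(A). Starting from x₀ ∈ lin(A), define iterates by choosing z_t ∈ A with ⟨∇f(x_t), z_t⟩ ≤ δ · min_{z∈A} ⟨∇f(x_t), z⟩ and setting x_{t+1} = x_t − (⟨∇f(x_t), z_t⟩/(L·r²))·z_t. Then, writing ε_t := f(x_t) − f(x⋆), for every t ≥ 0: ε_{t+1} ≤ (1 − δ²·μ·m²/(L·r²))·ε_t. -/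

import Mathlib

open Submodule Set Pointwise RealInnerProductSpace

set_option maxHeartbeats 1000000 in
/-- the non-affine-invariant linear rate of generalized matching
pursuit, expressed via the Hilbert-norm smoothness `L`, strong convexity `μ`, the
radius `r` of `A` and a lower bound `m` on the minimal directional width of `A`. -/
theorem stmt_6 {H : Type*} [NormedAddCommGroup H] [InnerProductSpace ℝ H] [CompleteSpace H]
    (A : Set H) (hA : IsCompact A) (hsym : ∀ z ∈ A, -z ∈ A)
    (f : H → ℝ) (f' : H → H) (hgrad : ∀ x, HasGradientAt f (f' x) x)
    (hconv : ConvexOn ℝ univ f)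
    (habs : ∀ x ∈ span ℝ A, ∃ c : ℝ, 0 < c ∧ x ∈ c • convexHull ℝ A)
    (hpos : ∀ x ∈ span ℝ A, x ≠ 0 → 0 < gauge (convexHull ℝ A) x)
    (δ μ L r m : ℝ) (hδ0 : 0 < δ) (hδ1 : δ ≤ 1) (hμ : 0 < μ) (hL : 0 < L) (hm : 0 < m)
    (hstrong : ∀ x ∈ span ℝ A, ∀ y ∈ span ℝ A,
      f x + ⟪f' x, y - x⟫ + μ / 2 * ‖y - x‖ ^ 2 ≤ f y)
    (hsmooth : ∀ x ∈ span ℝ A, ∀ y ∈ span ℝ A,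
      f y ≤ f x + ⟪f' x, y - x⟫ + L / 2 * ‖y - x‖ ^ 2)
    (hr : r = sSup ((fun z : H => ‖z‖) '' A))
    (hmdw : ∀ d ∈ span ℝ A, d ≠ 0 → m * ‖d‖ ≤ sSup ((fun z => ⟪d, z⟫) '' A))
    (xs : H) (hxs : xs ∈ span ℝ A) (hmin : ∀ y ∈ span ℝ A, f xs ≤ f y)
    (x z : ℕ → H)
    (hx0 : x 0 ∈ span ℝ A)
    (hzA : ∀ t, z t ∈ A)
    (hlmo : ∀ t, ⟪f' (x t), z t⟫ ≤ δ * sInf ((fun w => ⟪f' (x t), w⟫) '' A))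
    (hupd : ∀ t, x (t + 1) = x t - (⟪f' (x t), z t⟫ / (L * r ^ 2)) • z t) :
    ∀ t : ℕ, f (x (t + 1)) - f xs ≤ (1 - δ ^ 2 * μ * m ^ 2 / (L * r ^ 2)) * (f (x t) - f xs) := by
  have hAne : A.Nonempty := ⟨z 0, hzA 0⟩
  have hxmem : ∀ n, x n ∈ span ℝ A := by
    intro n
    induction n with
    | zero => exact hx0
    | succ n ih =>
      rw [hupd n]
      exact Submodule.sub_mem _ ih
        (Submodule.smul_mem _ _ (Submodule.subset_span (hzA n)))
  have hbdd : BddAbove ((fun z : H => ‖z‖) '' A) := (hA.image continuous_norm).bddAbove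
  have hrz : ∀ w ∈ A, ‖w‖ ≤ r := fun w hw => hr ▸ le_csSup hbdd ⟨w, hw, rfl⟩
  have hr0 : 0 ≤ r := le_trans (norm_nonneg _) (hrz _ (hzA 0))
  -- nonnegativity of suprema of inner products over A
  have hFbdd : ∀ d : H, BddAbove ((fun w => ⟪d, w⟫) '' A) := fun d =>
    (hA.image (Continuous.inner continuous_const continuous_id)).bddAbove
  have hFnonneg : ∀ d : H, 0 ≤ sSup ((fun w => ⟪d, w⟫) '' A) := by
    intro d
    have h1 : ⟪d, z 0⟫ ≤ sSup ((fun w => ⟪d, w⟫) '' A) :=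
      le_csSup (hFbdd d) ⟨z 0, hzA 0, rfl⟩
    have h2 : ⟪d, -(z 0)⟫ ≤ sSup ((fun w => ⟪d, w⟫) '' A) :=
      le_csSup (hFbdd d) ⟨-(z 0), hsym _ (hzA 0), rfl⟩
    rw [inner_neg_right] at h2
    linarith
  intro t
  have hε0 : 0 ≤ f (x t) - f xs := sub_nonneg.2 (hmin _ (hxmem t))
  rcases eq_or_lt_of_le hr0 with hr0' | hrpos
  · -- degenerate case r = 0 : A ⊆ {0}
    have hz0 : ∀ w ∈ A, w = (0 : H) := by
      intro w hw
      have := hrz w hw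
      rw [← hr0'] at this
      exact norm_le_zero_iff.1 this
    have hspan : span ℝ A ≤ ⊥ := by
      rw [← Submodule.span_zero_singleton (R := ℝ) (M := H)]
      exact Submodule.span_mono fun w hw => by simp [hz0 w hw]
    have hx0' : ∀ n, x n = 0 := fun n => by
      simpa using hspan (hxmem n)
    have hxs0 : xs = 0 := by simpa using hspan hxs
    have : f (x (t+1)) - f xs = 0 := by rw [hx0' (t+1), hxs0]; ring
    rw [this, hx0' t, hxs0, ← hr0']
    simp
  · -- main case r > 0
    set g := f' (x t) with hg
    set G := sSup ((fun w => ⟪g, w⟫) '' A) with hG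
    have hGnn : 0 ≤ G := hFnonneg g
    -- sInf ≤ -G by symmetry
    have hbddb : BddBelow ((fun w => ⟪g, w⟫) '' A) :=
      (hA.image (Continuous.inner continuous_const continuous_id)).bddBelow
    have hInf : sInf ((fun w => ⟪g, w⟫) '' A) ≤ -G := by
      have : G ≤ -sInf ((fun w => ⟪g, w⟫) '' A) := by
        apply csSup_le (hAne.image _)
        rintro v ⟨w, hw, rfl⟩
        have : sInf ((fun w => ⟪g, w⟫) '' A) ≤ ⟪g, -w⟫ :=
          csInf_le hbddb ⟨-w, hsym _ hw, rfl⟩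
        rw [inner_neg_right] at this
        linarith
      linarith
    set gz := ⟪g, z t⟫ with hgz
    have hgzG : gz ≤ -(δ * G) := by
      have := hlmo t
      rw [← hg, ← hgz] at this
      have h2 : δ * sInf ((fun w => ⟪g, w⟫) '' A) ≤ δ * (-G) :=
        mul_le_mul_of_nonneg_left hInf hδ0.le
      linarith
    -- smoothness step
    have hstep : f (x (t+1)) ≤ f (x t) - gz ^ 2 / (2 * (L * r ^ 2)) := by
      have hs := hsmooth (x t) (hxmem t) (x (t+1)) (hxmem (t+1))
      have hdiff : x (t+1) - x t = -((gz / (L * r ^ 2)) • z t) := by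
        rw [hupd t, ← hg, ← hgz]; abel
      rw [hdiff] at hs
      rw [inner_neg_right, real_inner_smul_right] at hs
      have hzn : ‖-((gz / (L * r ^ 2)) • z t)‖ ^ 2
          = (gz / (L * r ^ 2)) ^ 2 * ‖z t‖ ^ 2 := by
        rw [norm_neg, norm_smul, mul_pow, Real.norm_eq_abs, sq_abs]
      rw [hzn] at hs
      have hzr : ‖z t‖ ^ 2 ≤ r ^ 2 := by
        have := hrz _ (hzA t)
        nlinarith [norm_nonneg (z t)]
      have hc : (0:ℝ) < L * r ^ 2 := by positivity
      have key : -(gz / (L * r ^ 2) * gz) + L / 2 * ((gz / (L * r ^ 2)) ^ 2 * ‖z t‖ ^ 2)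
          ≤ - (gz ^ 2 / (2 * (L * r ^ 2))) := by
        have h1 : L / 2 * ((gz / (L * r ^ 2)) ^ 2 * ‖z t‖ ^ 2)
            ≤ L / 2 * ((gz / (L * r ^ 2)) ^ 2 * r ^ 2) := by
          have : (0:ℝ) ≤ L / 2 * (gz / (L * r ^ 2)) ^ 2 := by positivity
          nlinarith
        have h2 : -(gz / (L * r ^ 2) * gz) + L / 2 * ((gz / (L * r ^ 2)) ^ 2 * r ^ 2)
            = - (gz ^ 2 / (2 * (L * r ^ 2))) := by
          field_simp
          ring
        linarith
      linarith
    -- strong convexity bound via projected gradient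
    set K := (span ℝ A).topologicalClosure with hK
    have hAK : ∀ w ∈ A, w ∈ K := fun w hw =>
      (le_topologicalClosure _) (Submodule.subset_span hw)
    set p := (orthogonalProjection K g : H) with hp
    have hpg : ∀ w ∈ K, ⟪g, w⟫ = ⟪p, w⟫ := by
      intro w hw
      have : ⟪g - p, w⟫ = 0 := Submodule.starProjection_inner_eq_zero (K := K) g w hw
      rw [inner_sub_left] at this
      linarith
    -- extended minimal width on the closure
    have hmdw' : m * ‖p‖ ≤ sSup ((fun w => ⟪p, w⟫) '' A) := by
      have hpK : p ∈ closure ((span ℝ A : Set H)) := SetLike.coe_mem (orthogonalProjection K g)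
      apply le_of_forall_pos_le_add
      intro ε hε
      obtain ⟨d', hd'S, hd'⟩ : ∃ d' ∈ (span ℝ A : Set H), dist p d' < ε / (m + r + 1) := by
        have := Metric.mem_closure_iff.1 hpK (ε / (m + r + 1)) (by positivity)
        exact this
      have hdist : ‖p - d'‖ < ε / (m + r + 1) := by rwa [← dist_eq_norm]
      have h1 : m * ‖d'‖ ≤ sSup ((fun w => ⟪d', w⟫) '' A) := by
        rcases eq_or_ne d' 0 with h | h
        · rw [h]; simpa using hFnonneg 0
        · exact hmdw d' hd'S h
      have h2 : sSup ((fun w => ⟪d', w⟫) '' A)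
          ≤ sSup ((fun w => ⟪p, w⟫) '' A) + ‖p - d'‖ * r := by
        apply csSup_le (hAne.image _)
        rintro v ⟨w, hw, rfl⟩
        have hle : ⟪p, w⟫ ≤ sSup ((fun w => ⟪p, w⟫) '' A) :=
          le_csSup (hFbdd p) ⟨w, hw, rfl⟩
        have hdw : ⟪d' - p, w⟫ ≤ ‖p - d'‖ * r := by
          calc ⟪d' - p, w⟫ ≤ ‖d' - p‖ * ‖w‖ := real_inner_le_norm _ _
            _ ≤ ‖p - d'‖ * r := by
                rw [norm_sub_rev]
                exact mul_le_mul_of_nonneg_left (hrz w hw) (norm_nonneg _)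
        have : ⟪d', w⟫ = ⟪p, w⟫ + ⟪d' - p, w⟫ := by
          rw [inner_sub_left]; ring
        linarith
      have h3 : m * ‖p‖ ≤ m * ‖d'‖ + m * ‖p - d'‖ := by
        have := norm_sub_norm_le p d'
        nlinarith
      have hb : ‖p - d'‖ * (m + r) ≤ ε := by
        have hmr : (0:ℝ) ≤ m + r := by linarith
        have : ‖p - d'‖ * (m + r + 1) ≤ ε := by
          have := hdist.le
          calc ‖p - d'‖ * (m + r + 1) ≤ ε / (m + r + 1) * (m + r + 1) := by
                apply mul_le_mul_of_nonneg_right this (by linarith)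
            _ = ε := by field_simp
        nlinarith [norm_nonneg (p - d')]
      nlinarith [norm_nonneg (p - d')]
    have himg : ((fun w => ⟪p, w⟫) '' A) = ((fun w => ⟪g, w⟫) '' A) :=
      Set.image_congr fun w hw => (hpg w (hAK w hw)).symm
    have hmpG : m * ‖p‖ ≤ G := by rw [hG, ← himg]; exact hmdw'
    -- strong convexity
    have hsc := hstrong (x t) (hxmem t) xs hxs
    have hinner : ⟪g, x t - xs⟫ ≤ ‖p‖ * ‖x t - xs‖ := by
      have hmemK : x t - xs ∈ K :=
        (le_topologicalClosure _) (Submodule.sub_mem _ (hxmem t) hxs)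
      rw [hpg _ hmemK]
      exact real_inner_le_norm _ _
    have hε : f (x t) - f xs ≤ ‖p‖ * ‖x t - xs‖ - μ / 2 * ‖x t - xs‖ ^ 2 := by
      have : ⟪g, xs - x t⟫ = -⟪g, x t - xs⟫ := by
        rw [← inner_neg_right]; congr 1; abel
      rw [this] at hsc
      have hnn : ‖xs - x t‖ = ‖x t - xs‖ := norm_sub_rev _ _
      rw [hnn] at hsc
      linarith
    have hεp : 2 * μ * (f (x t) - f xs) ≤ ‖p‖ ^ 2 := by
      nlinarith [mul_le_mul_of_nonneg_left hε hμ.le,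
        sq_nonneg (‖p‖ - μ * ‖x t - xs‖)]
    -- combine: gz^2 ≥ δ^2 G^2 ≥ δ^2 m^2 * 2μ ε
    have hG2 : 2 * μ * (m ^ 2) * (f (x t) - f xs) ≤ G ^ 2 := by
      have h1 : (m * ‖p‖) ^ 2 ≤ G ^ 2 := by
        have hnn : 0 ≤ m * ‖p‖ := mul_nonneg hm.le (norm_nonneg p)
        nlinarith
      nlinarith [mul_le_mul_of_nonneg_left hεp (sq_nonneg m)]
    have hgz2 : δ ^ 2 * G ^ 2 ≤ gz ^ 2 := by
      nlinarith [mul_nonneg hδ0.le hGnn]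
    have hc : (0:ℝ) < L * r ^ 2 := by positivity
    have hfinal : δ ^ 2 * (2 * μ * m ^ 2 * (f (x t) - f xs)) / (2 * (L * r ^ 2))
        ≤ gz ^ 2 / (2 * (L * r ^ 2)) := by
      apply (div_le_div_iff_of_pos_right (by positivity)).2
      nlinarith [sq_nonneg δ]
    have heq : δ ^ 2 * (2 * μ * m ^ 2 * (f (x t) - f xs)) / (2 * (L * r ^ 2))
        = δ ^ 2 * μ * m ^ 2 / (L * r ^ 2) * (f (x t) - f xs) := by
      field_simp
    calc f (x (t+1)) - f xs ≤ f (x t) - f xs - gz ^ 2 / (2 * (L * r ^ 2)) := by linarith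
      _ ≤ f (x t) - f xs - δ ^ 2 * μ * m ^ 2 / (L * r ^ 2) * (f (x t) - f xs) := by
          rw [← heq]; linarith
      _ = (1 - δ ^ 2 * μ * m ^ 2 / (L * r ^ 2)) * (f (x t) - f xs) := by ring
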